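/- For all sufficiently large natural numbers d, the degree-d polynomial L_d has d distinct complex roots; that is, the set of complex zeros of L_d has cardinality d. -/

import Mathlib

open Finset Polynomial

/-- `binom(y, d) = (∏_{k=0}^{d-1} (y - k)) / d!` for complex `y`. -/
noncomputable def cbinom (y : ℂ) (d : ℕ) : ℂ :=
  (∏ k ∈ Finset.range d, (y - k)) / (Nat.factorial d : ℂ)

/-- The Ehrhart polynomial of the `d`-dimensional cross-polytope. -/
noncomputable def Lpoly (d : ℕ) (x : ℂ) : ℂ :=
  ∑ j ∈ Finset.range (d + 1), (Nat.choose d j : ℂ) * cbinom ((d : ℂ) - (j : ℂ) + x) d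

lemma cbinom_zero (y : ℂ) : cbinom y 0 = 1 := by simp [cbinom]

lemma cbinom_pascal (y : ℂ) (d : ℕ) :
    cbinom (y + 1) (d + 1) = cbinom y (d + 1) + cbinom y d := by
  have h1 : ∏ k ∈ range (d + 1), (y + 1 - (k : ℂ)) = (y + 1) * ∏ k ∈ range d, (y - k) := by
    rw [Finset.prod_range_succ']
    have h0 : (∏ k ∈ range d, (y + 1 - ((k : ℕ) + 1 : ℕ))) = ∏ k ∈ range d, (y - k) :=
      Finset.prod_congr rfl (fun k _ => by push_cast; ring)
    rw [h0]
    push_cast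
    ring
  have h2 : ∏ k ∈ range (d + 1), (y - (k : ℂ)) = (∏ k ∈ range d, (y - k)) * (y - d) := by
    rw [Finset.prod_range_succ]
  have hf : (Nat.factorial (d+1) : ℂ) = (d+1) * Nat.factorial d := by
    push_cast [Nat.factorial_succ]; ring
  have hd : (Nat.factorial d : ℂ) ≠ 0 := by exact_mod_cast Nat.factorial_ne_zero d
  have hd1 : ((d : ℂ) + 1) ≠ 0 := Nat.cast_add_one_ne_zero d
  simp only [cbinom, h1, h2, hf]
  field_simp
  ring

lemma cbinom_vdm (t : ℂ) (m n : ℕ) :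
    cbinom (t + m) n = ∑ k ∈ range (n + 1), (Nat.choose m (n - k) : ℂ) * cbinom t k := by
  induction m generalizing n with
  | zero =>
    rw [Finset.sum_eq_single n]
    · simp
    · intro k hk hkn
      have : n - k ≠ 0 := by
        simp only [Finset.mem_range] at hk; omega
      simp [Nat.choose_eq_zero_iff.2 (by omega : 0 < n - k)]
    · intro h; exact absurd (Finset.self_mem_range_succ n) h
  | succ m ih =>
    have key : (t : ℂ) + (m + 1 : ℕ) = (t + m) + 1 := by push_cast; ring
    rw [key]
    cases n with
    | zero => simp [cbinom_zero]
    | succ n =>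
      rw [cbinom_pascal, ih (n+1), ih n]
      rw [Finset.sum_range_succ (fun k => (Nat.choose m (n + 1 - k) : ℂ) * cbinom t k)]
      rw [Finset.sum_range_succ (fun k => (Nat.choose (m+1) (n + 1 - k) : ℂ) * cbinom t k)]
      simp only [Nat.sub_self, Nat.choose_zero_right, Nat.cast_one, one_mul]
      rw [add_right_comm, ← Finset.sum_add_distrib]
      congr 1
      apply Finset.sum_congr rfl
      intro k hk
      have hk' : k ≤ n := by simpa [Nat.lt_succ_iff] using hk
      have : n + 1 - k = (n - k) + 1 := by omega
      rw [this, Nat.choose_succ_succ]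
      push_cast
      ring

lemma trin (n k j : ℕ) (hj : j ≤ k) (hk : k ≤ n) :
    n.choose k * k.choose j = n.choose j * (n - j).choose (k - j) := by
  have hpos : 0 < j.factorial * ((k - j).factorial * (n - k).factorial) :=
    Nat.mul_pos (Nat.factorial_pos _) (Nat.mul_pos (Nat.factorial_pos _) (Nat.factorial_pos _))
  apply Nat.eq_of_mul_eq_mul_right hpos
  have h1 : n.choose k * k.factorial * (n - k).factorial = n.factorial :=
    Nat.choose_mul_factorial_mul_factorial hk
  have h2 : k.choose j * j.factorial * (k - j).factorial = k.factorial :=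
    Nat.choose_mul_factorial_mul_factorial hj
  have h3 : (n - j).choose (k - j) * (k - j).factorial * (n - j - (k - j)).factorial
      = (n - j).factorial := Nat.choose_mul_factorial_mul_factorial (by omega)
  have h4 : n.choose j * j.factorial * (n - j).factorial = n.factorial :=
    Nat.choose_mul_factorial_mul_factorial (hj.trans hk)
  have hrw : n - j - (k - j) = n - k := by omega
  rw [hrw] at h3
  calc n.choose k * k.choose j * (j.factorial * ((k - j).factorial * (n - k).factorial))
      = n.choose k * (k.choose j * j.factorial * (k - j).factorial) * (n - k).factorial := by
        ring
    _ = n.choose k * k.factorial * (n - k).factorial := by rw [h2]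
    _ = n.factorial := h1
    _ = n.choose j * j.factorial * (n - j).factorial := h4.symm
    _ = n.choose j * j.factorial * ((n - j).choose (k - j) * (k - j).factorial
          * (n - k).factorial) := by rw [h3]
    _ = n.choose j * (n - j).choose (k - j) * (j.factorial * ((k - j).factorial
          * (n - k).factorial)) := by ring

lemma tri_sum (d k : ℕ) (hk : k ≤ d) :
    ∑ j ∈ range (d + 1), d.choose j * (d - j).choose (d - k) = 2 ^ k * d.choose k := by
  have h : ∀ j ∈ range (d + 1),
      d.choose j * (d - j).choose (d - k) = d.choose k * k.choose j := by
    intro j hj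
    have hj' : j ≤ d := by simpa [Nat.lt_succ_iff] using hj
    by_cases hjk : j ≤ k
    · rw [(by omega : d - k = (d - j) - (k - j)),
        Nat.choose_symm (by omega : k - j ≤ d - j)]
      exact (trin d k j hjk hk).symm
    · rw [Nat.choose_eq_zero_of_lt (by omega : d - j < d - k),
        Nat.choose_eq_zero_of_lt (by omega : k < j)]
      simp
  rw [Finset.sum_congr rfl h, ← Finset.mul_sum]
  have hs : ∑ j ∈ range (d + 1), k.choose j = ∑ j ∈ range (k + 1), k.choose j := by
    refine (Finset.sum_subset (by intro x hx; simp only [mem_range] at *; omega) ?_).symm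
    intro x _ hx
    simp only [mem_range] at hx
    exact Nat.choose_eq_zero_of_lt (by omega)
  rw [hs, Nat.sum_range_choose]
  ring

lemma Lpoly_eq_M (d : ℕ) (t : ℂ) :
    Lpoly d t = ∑ k ∈ range (d + 1), ((2 ^ k * d.choose k : ℕ) : ℂ) * cbinom t k := by
  have step1 : ∀ j ∈ range (d + 1),
      (d.choose j : ℂ) * cbinom ((d : ℂ) - (j : ℂ) + t) d
        = ∑ k ∈ range (d + 1), (d.choose j : ℂ) * ((((d - j).choose (d - k) : ℕ)) : ℂ)
            * cbinom t k := by
    intro j hj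
    have hj' : j ≤ d := by simpa [Nat.lt_succ_iff] using hj
    have : (d : ℂ) - (j : ℂ) + t = t + ((d - j : ℕ) : ℂ) := by
      push_cast [Nat.cast_sub hj']; ring
    rw [this, cbinom_vdm t (d - j) d, Finset.mul_sum]
    exact Finset.sum_congr rfl (fun k _ => by ring)
  rw [Lpoly, Finset.sum_congr rfl step1, Finset.sum_comm]
  apply Finset.sum_congr rfl
  intro k hk
  have hk' : k ≤ d := by simpa [Nat.lt_succ_iff] using hk
  rw [← Finset.sum_mul]
  congr 1
  have : ∀ j ∈ range (d + 1), (d.choose j : ℂ) * (((d - j).choose (d - k) : ℕ) : ℂ)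
      = ((d.choose j * (d - j).choose (d - k) : ℕ) : ℂ) := by intro j _; push_cast; ring
  rw [Finset.sum_congr rfl this, ← Nat.cast_sum, tri_sum d k hk']

lemma cbinom_mul_t (t : ℂ) (k : ℕ) :
    t * cbinom t k = ((k : ℂ) + 1) * cbinom t (k + 1) + (k : ℂ) * cbinom t k := by
  have hp : ∏ j ∈ range (k + 1), (t - (j : ℂ)) = (∏ j ∈ range k, (t - j)) * (t - k) :=
    Finset.prod_range_succ _ _
  have hf : (Nat.factorial (k + 1) : ℂ) = ((k : ℂ) + 1) * Nat.factorial k := by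
    push_cast [Nat.factorial_succ]; ring
  have hd : (Nat.factorial k : ℂ) ≠ 0 := by exact_mod_cast Nat.factorial_ne_zero k
  have hd1 : ((k : ℂ) + 1) ≠ 0 := Nat.cast_add_one_ne_zero k
  simp only [cbinom, hp, hf]
  field_simp
  ring

lemma key_nat (d k : ℕ) :
    ((d + 2) * Nat.choose (d + 2) k : ℤ)
      = k * Nat.choose (d + 1) (k - 1) + (2 * k + 1) * Nat.choose (d + 1) k
        + (d + 1) * Nat.choose d k := by
  cases k with
  | zero => push_cast; simp; ring
  | succ k =>
    have hp : Nat.choose (d + 2) (k + 1) = Nat.choose (d + 1) k + Nat.choose (d + 1) (k + 1) :=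
      Nat.choose_succ_succ' (d + 1) k
    by_cases hkd : k ≤ d
    · have h1 := Nat.choose_succ_right_eq (d + 1) k
      zify [show k ≤ d + 1 by omega] at h1
      have h2 := Nat.choose_mul_succ_eq d (k + 1)
      zify [show k + 1 ≤ d + 1 by omega] at h2
      rw [hp]
      simp only [Nat.add_sub_cancel]
      push_cast
      linear_combination -h1 - h2
    · by_cases hkd1 : k = d + 1
      · subst hkd1
        have e0 : d.choose (d + 1 + 1) = 0 := Nat.choose_eq_zero_of_lt (by omega)
        simp only [Nat.add_sub_cancel, Nat.choose_self, Nat.choose_succ_self, e0]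
        push_cast
        ring
      · have e1 : Nat.choose (d + 2) (k + 1) = 0 := Nat.choose_eq_zero_of_lt (by omega)
        have e2 : Nat.choose (d + 1) k = 0 := Nat.choose_eq_zero_of_lt (by omega)
        have e3 : Nat.choose (d + 1) (k + 1) = 0 := Nat.choose_eq_zero_of_lt (by omega)
        have e4 : Nat.choose d (k + 1) = 0 := Nat.choose_eq_zero_of_lt (by omega)
        simp [e1, e2, e3, e4]

lemma Lpoly_rec (d : ℕ) (t : ℂ) :
    ((d : ℂ) + 2) * Lpoly (d + 2) t
      = (2 * t + 1) * Lpoly (d + 1) t + ((d : ℂ) + 1) * Lpoly d t := by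
  rw [Lpoly_eq_M d t, Lpoly_eq_M (d + 1) t, Lpoly_eq_M (d + 2) t]
  have e1 : (2 * t + 1) * ∑ k ∈ range (d + 2), ((2 ^ k * (d + 1).choose k : ℕ) : ℂ) * cbinom t k
      = (∑ k ∈ range (d + 2),
          ((2 ^ k * (d + 1).choose k : ℕ) : ℂ) * (2 * ((k : ℂ) + 1)) * cbinom t (k + 1))
        + ∑ k ∈ range (d + 2),
            ((2 ^ k * (d + 1).choose k : ℕ) : ℂ) * (2 * (k : ℂ) + 1) * cbinom t k := by
    rw [Finset.mul_sum, ← Finset.sum_add_distrib]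
    apply Finset.sum_congr rfl
    intro k _
    have h : (2 * t + 1) * (((2 ^ k * (d + 1).choose k : ℕ) : ℂ) * cbinom t k)
        = ((2 ^ k * (d + 1).choose k : ℕ) : ℂ) * (2 * (t * cbinom t k) + cbinom t k) := by ring
    rw [h, cbinom_mul_t t k]
    ring
  rw [e1]
  have e2 : ∑ k ∈ range (d + 2),
        ((2 ^ k * (d + 1).choose k : ℕ) : ℂ) * (2 * ((k : ℂ) + 1)) * cbinom t (k + 1)
      = ∑ k ∈ range (d + 3), (k : ℂ) * ((2 ^ k * (d + 1).choose (k - 1) : ℕ) : ℂ) * cbinom t k := by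
    rw [Finset.sum_range_succ'
      (fun k => (k : ℂ) * ((2 ^ k * (d + 1).choose (k - 1) : ℕ) : ℂ) * cbinom t k) (d + 2)]
    simp only [Nat.cast_zero, zero_mul, add_zero, Nat.add_sub_cancel]
    apply Finset.sum_congr rfl
    intro k _
    push_cast
    ring
  rw [e2]
  have e3 : ∑ k ∈ range (d + 2),
        ((2 ^ k * (d + 1).choose k : ℕ) : ℂ) * (2 * (k : ℂ) + 1) * cbinom t k
      = ∑ k ∈ range (d + 3),
          ((2 ^ k * (d + 1).choose k : ℕ) : ℂ) * (2 * (k : ℂ) + 1) * cbinom t k := by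
    refine Finset.sum_subset (Finset.range_subset_range.mpr (by omega)) ?_
    intro x _ hx
    simp only [mem_range] at hx
    have : (d + 1).choose x = 0 := Nat.choose_eq_zero_of_lt (by omega)
    simp [this]
  rw [e3]
  have e4 : ((d : ℂ) + 1) * ∑ k ∈ range (d + 1), ((2 ^ k * d.choose k : ℕ) : ℂ) * cbinom t k
      = ∑ k ∈ range (d + 3),
          ((d : ℂ) + 1) * (((2 ^ k * d.choose k : ℕ) : ℂ) * cbinom t k) := by
    rw [Finset.mul_sum]
    refine Finset.sum_subset (Finset.range_subset_range.mpr (by omega)) ?_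
    intro x _ hx
    simp only [mem_range] at hx
    have : d.choose x = 0 := Nat.choose_eq_zero_of_lt (by omega)
    simp [this]
  rw [e4, Finset.mul_sum, ← Finset.sum_add_distrib, ← Finset.sum_add_distrib]
  apply Finset.sum_congr rfl
  intro k _
  have hk := key_nat d k
  have hc : ((d : ℂ) + 2) * ((d + 2).choose k : ℂ)
      = (k : ℂ) * ((d + 1).choose (k - 1) : ℂ) + (2 * (k : ℂ) + 1) * ((d + 1).choose k : ℂ)
        + ((d : ℂ) + 1) * (d.choose k : ℂ) := by exact_mod_cast hk
  push_cast
  linear_combination (2 : ℂ) ^ k * cbinom t k * hc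

lemma Lpoly_zero (t : ℂ) : Lpoly 0 t = 1 := by
  simp [Lpoly, cbinom]

lemma Lpoly_one (t : ℂ) : Lpoly 1 t = 2 * t + 1 := by
  simp [Lpoly, cbinom, Finset.sum_range_succ]
  ring

noncomputable def P : ℕ → Polynomial ℝ
  | 0 => 1
  | 1 => Polynomial.C 2 * Polynomial.X
  | n + 2 => Polynomial.C (((n : ℝ) + 2)⁻¹)
      * (Polynomial.C 2 * Polynomial.X * P (n + 1) - Polynomial.C ((n : ℝ) + 1) * P n)

lemma P_spec : ∀ n : ℕ, (P n).natDegree = n ∧ 0 < (P n).leadingCoeff := by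
  intro n
  induction n using Nat.strong_induction_on with
  | _ n ih =>
    match n with
    | 0 => simp [P]
    | 1 =>
      constructor
      · simp [P]
      · rw [show P 1 = Polynomial.C 2 * Polynomial.X from rfl, Polynomial.leadingCoeff_mul]
        simp
    | n + 2 =>
      obtain ⟨hd1, hl1⟩ := ih (n + 1) (by omega)
      obtain ⟨hd0, hl0⟩ := ih n (by omega)
      have hP1 : P (n + 1) ≠ 0 := Polynomial.leadingCoeff_ne_zero.mp (ne_of_gt hl1)
      have hA : (Polynomial.C 2 * Polynomial.X * P (n + 1)).natDegree = n + 2 := by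
        rw [Polynomial.natDegree_mul (by
          simp : (Polynomial.C (2:ℝ) * Polynomial.X) ≠ 0) hP1]
        simp [hd1]
        ring
      have hlA : (Polynomial.C 2 * Polynomial.X * P (n + 1)).leadingCoeff
          = 2 * (P (n + 1)).leadingCoeff := by
        rw [Polynomial.leadingCoeff_mul, Polynomial.leadingCoeff_mul]
        simp
      have hB : (Polynomial.C ((n : ℝ) + 1) * P n).natDegree < n + 2 := by
        calc (Polynomial.C ((n : ℝ) + 1) * P n).natDegree ≤ (P n).natDegree :=
              Polynomial.natDegree_C_mul_le _ _
        _ < n + 2 := by omega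
      have hdegBA : (Polynomial.C ((n : ℝ) + 1) * P n).degree
          < (Polynomial.C 2 * Polynomial.X * P (n + 1)).degree :=
        Polynomial.degree_lt_degree (by rw [hA]; exact hB)
      have hsub_deg : (Polynomial.C 2 * Polynomial.X * P (n + 1)
          - Polynomial.C ((n : ℝ) + 1) * P n).natDegree = n + 2 := by
        rw [Polynomial.natDegree_sub_eq_left_of_natDegree_lt (by rw [hA]; exact hB), hA]
      have hsub_lc : (Polynomial.C 2 * Polynomial.X * P (n + 1)
          - Polynomial.C ((n : ℝ) + 1) * P n).leadingCoeff
          = 2 * (P (n + 1)).leadingCoeff := by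
        rw [Polynomial.leadingCoeff_sub_of_degree_lt hdegBA, hlA]
      have hc : (((n : ℝ) + 2)⁻¹) ≠ 0 := by positivity
      constructor
      · rw [show P (n + 2) = Polynomial.C (((n : ℝ) + 2)⁻¹)
            * (Polynomial.C 2 * Polynomial.X * P (n + 1)
              - Polynomial.C ((n : ℝ) + 1) * P n) from rfl,
          Polynomial.natDegree_C_mul hc, hsub_deg]
      · rw [show P (n + 2) = Polynomial.C (((n : ℝ) + 2)⁻¹)
            * (Polynomial.C 2 * Polynomial.X * P (n + 1)
              - Polynomial.C ((n : ℝ) + 1) * P n) from rfl,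
          Polynomial.leadingCoeff_mul, Polynomial.leadingCoeff_C, hsub_lc]
        positivity

lemma Lpoly_line : ∀ (d : ℕ) (y : ℝ),
    Lpoly d (-(1/2) + Complex.I * y) = Complex.I ^ d * (((P d).eval y : ℝ) : ℂ) := by
  intro d
  induction d using Nat.strong_induction_on with
  | _ d ih =>
    match d with
    | 0 => intro y; simp [Lpoly_zero, P]
    | 1 =>
      intro y
      rw [Lpoly_one]
      simp only [P, pow_one, Polynomial.eval_mul, Polynomial.eval_C, Polynomial.eval_X]
      push_cast
      ring
    | n + 2 =>
      intro y
      have ih1 := ih (n + 1) (by omega) y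
      have ih0 := ih n (by omega) y
      have hd2 : ((n : ℂ) + 2) ≠ 0 := by
        have : ((n + 2 : ℕ) : ℂ) ≠ 0 := Nat.cast_ne_zero.mpr (by omega)
        push_cast at this
        exact this
      have hr2 : ((n : ℝ) + 2) ≠ 0 := by positivity
      have hy' : ((n : ℝ) + 2) * (P (n + 2)).eval y
          = 2 * y * (P (n + 1)).eval y - ((n : ℝ) + 1) * (P n).eval y := by
        rw [show P (n + 2) = Polynomial.C (((n : ℝ) + 2)⁻¹)
            * (Polynomial.C 2 * Polynomial.X * P (n + 1)
              - Polynomial.C ((n : ℝ) + 1) * P n) from rfl]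
        simp only [Polynomial.eval_mul, Polynomial.eval_C, Polynomial.eval_sub,
          Polynomial.eval_X]
        field_simp
      apply mul_left_cancel₀ hd2
      rw [Lpoly_rec n _, ih1, ih0]
      have hcast : ((n : ℂ) + 2) * (Complex.I ^ (n + 2) * (((P (n + 2)).eval y : ℝ) : ℂ))
          = Complex.I ^ (n + 2)
            * (((2 * y * (P (n + 1)).eval y - ((n : ℝ) + 1) * (P n).eval y : ℝ)) : ℂ) := by
        rw [← hy']
        push_cast
        ring
      rw [hcast]
      push_cast
      linear_combination ((n : ℂ) + 1) * Complex.I ^ n * (((P n).eval y : ℝ) : ℂ) * Complex.I_sq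

lemma P_eval_rec (n : ℕ) (y : ℝ) : ((n : ℝ) + 2) * (P (n + 2)).eval y
    = 2 * y * (P (n + 1)).eval y - ((n : ℝ) + 1) * (P n).eval y := by
  have hr2 : ((n : ℝ) + 2) ≠ 0 := by positivity
  rw [show P (n + 2) = Polynomial.C (((n : ℝ) + 2)⁻¹)
      * (Polynomial.C 2 * Polynomial.X * P (n + 1)
        - Polynomial.C ((n : ℝ) + 1) * P n) from rfl]
  simp only [Polynomial.eval_mul, Polynomial.eval_C, Polynomial.eval_sub, Polynomial.eval_X]
  field_simp

-- sign of polynomial from its roots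
lemma eval_sign (p : Polynomial ℝ) (n : ℕ) (hdeg : p.natDegree = n) (hlc : 0 < p.leadingCoeff)
    (r : Fin n → ℝ) (hinj : Function.Injective r) (hroot : ∀ i, p.eval (r i) = 0)
    (x : ℝ) (m : ℕ) (hm : (Finset.univ.filter (fun i => x < r i)).card = m)
    (hx : ∀ i, r i ≠ x) :
    0 < (-1 : ℝ) ^ m * p.eval x := by
  have hp0 : p ≠ 0 := Polynomial.leadingCoeff_ne_zero.mp (ne_of_gt hlc)
  set S : Multiset ℝ := Finset.univ.val.map r with hS
  have hnodup : S.Nodup := Multiset.Nodup.map hinj Finset.univ.nodup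
  have hsub : S ⊆ p.roots := by
    intro a ha
    rw [hS, Multiset.mem_map] at ha
    obtain ⟨i, _, rfl⟩ := ha
    rw [Polynomial.mem_roots hp0]
    exact hroot i
  have hle : S ≤ p.roots := (Multiset.le_iff_subset hnodup).mpr hsub
  have hcardS : Multiset.card S = n := by simp [hS]
  have hroots_eq : p.roots = S :=
    (Multiset.eq_of_le_of_card_le hle (by rw [hcardS, ← hdeg]; exact p.card_roots')).symm
  have hcard_eq : Multiset.card p.roots = p.natDegree := by rw [hroots_eq, hcardS, hdeg]
  have hfact := Polynomial.C_leadingCoeff_mul_prod_multiset_X_sub_C hcard_eq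
  have heval : p.eval x = p.leadingCoeff * ∏ i : Fin n, (x - r i) := by
    conv_lhs => rw [← hfact]
    rw [Polynomial.eval_mul, Polynomial.eval_C, Polynomial.eval_multiset_prod, hroots_eq, hS,
      Multiset.map_map, Multiset.map_map]
    congr 1
    rw [Multiset.map_congr rfl
      (fun i _ => (by simp : ((Polynomial.eval x ∘ fun a => Polynomial.X - Polynomial.C a) ∘ r) i
        = x - r i))]
    rfl
  set A := Finset.univ.filter (fun i : Fin n => x < r i) with hA
  have hsplit : ∏ i : Fin n, (x - r i)
      = (∏ i ∈ A, (x - r i)) * ∏ i ∈ Finset.univ.filter (fun i => ¬(x < r i)), (x - r i) :=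
    (Finset.prod_filter_mul_prod_filter_not _ _ _).symm
  have hnegprod : ∏ i ∈ A, (x - r i) = (-1 : ℝ) ^ m * ∏ i ∈ A, (r i - x) := by
    calc ∏ i ∈ A, (x - r i) = ∏ i ∈ A, (-1 * (r i - x)) :=
          Finset.prod_congr rfl (fun i _ => by ring)
      _ = (∏ _i ∈ A, (-1 : ℝ)) * ∏ i ∈ A, (r i - x) := Finset.prod_mul_distrib
      _ = (-1 : ℝ) ^ m * ∏ i ∈ A, (r i - x) := by rw [Finset.prod_const, hm]
  have hpos1 : 0 < ∏ i ∈ A, (r i - x) := by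
    apply Finset.prod_pos
    intro i hi
    rw [hA, Finset.mem_filter] at hi
    linarith [hi.2]
  have hpos2 : 0 < ∏ i ∈ Finset.univ.filter (fun i => ¬(x < r i)), (x - r i) := by
    apply Finset.prod_pos
    intro i hi
    rw [Finset.mem_filter] at hi
    rcases lt_or_eq_of_le (not_lt.mp hi.2) with h | h
    · linarith
    · exact absurd h (hx i)
  have hone : (-1 : ℝ) ^ m * (-1) ^ m = 1 := by rw [← mul_pow]; norm_num
  have key : (-1 : ℝ) ^ m * p.eval x
      = p.leadingCoeff * ((∏ i ∈ A, (r i - x))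
          * ∏ i ∈ Finset.univ.filter (fun i => ¬(x < r i)), (x - r i)) := by
    rw [heval, hsplit, hnegprod]
    linear_combination (p.leadingCoeff * (∏ i ∈ A, (r i - x))
      * ∏ i ∈ Finset.univ.filter (fun i => ¬(x < r i)), (x - r i)) * hone
  rw [key]
  exact mul_pos hlc (mul_pos hpos1 hpos2)

lemma exists_gt_pos (p : Polynomial ℝ) (hdeg : 0 < p.natDegree) (hlc : 0 < p.leadingCoeff)
    (a : ℝ) : ∃ b, a < b ∧ 0 < p.eval b := by
  have hdeg' : 0 < p.degree := Polynomial.natDegree_pos_iff_degree_pos.mp hdeg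
  have ht := Polynomial.tendsto_atTop_of_leadingCoeff_nonneg p hdeg' hlc.le
  have h1 : ∀ᶠ x in Filter.atTop, 0 < p.eval x := ht.eventually_gt_atTop 0
  have h2 : ∀ᶠ x : ℝ in Filter.atTop, a < x := Filter.eventually_gt_atTop a
  obtain ⟨b, hb1, hb2⟩ := (h1.and h2).exists
  exact ⟨b, hb2, hb1⟩

lemma exists_lt_sign (p : Polynomial ℝ) (hdeg : 0 < p.natDegree) (hlc : 0 < p.leadingCoeff)
    (a : ℝ) : ∃ b, b < a ∧ 0 < (-1 : ℝ) ^ p.natDegree * p.eval b := by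
  set q : Polynomial ℝ := Polynomial.C ((-1 : ℝ) ^ p.natDegree) * p.comp (-Polynomial.X)
    with hq
  have hcompdeg : (p.comp (-Polynomial.X)).natDegree = p.natDegree := by
    rw [Polynomial.natDegree_comp]
    simp
  have hclc : ((-1 : ℝ) ^ p.natDegree) ≠ 0 := by
    apply pow_ne_zero; norm_num
  have hqdeg : q.natDegree = p.natDegree := by
    rw [hq, Polynomial.natDegree_C_mul hclc, hcompdeg]
  have hqlc : 0 < q.leadingCoeff := by
    rw [hq, Polynomial.leadingCoeff_mul, Polynomial.leadingCoeff_C,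
      Polynomial.leadingCoeff_comp (by simp : (-Polynomial.X : Polynomial ℝ).natDegree ≠ 0)]
    have : (-Polynomial.X : Polynomial ℝ).leadingCoeff = -1 := by simp
    rw [this]
    have h2 : ((-1 : ℝ) ^ p.natDegree) * ((-1) ^ p.natDegree) = 1 := by
      rw [← mul_pow]; norm_num
    calc (0 : ℝ) < p.leadingCoeff * 1 := by linarith
      _ = (-1 : ℝ) ^ p.natDegree * (p.leadingCoeff * (-1) ^ p.natDegree) := by
          linear_combination p.leadingCoeff * h2.symm
  obtain ⟨b', hb1, hb2⟩ := exists_gt_pos q (by omega : 0 < q.natDegree) hqlc (-a)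
  refine ⟨-b', by linarith, ?_⟩
  have : q.eval b' = (-1 : ℝ) ^ p.natDegree * p.eval (-b') := by
    rw [hq, Polynomial.eval_mul, Polynomial.eval_C, Polynomial.eval_comp]
    simp
  rw [← this]
  exact hb2

lemma root_ivt (p : Polynomial ℝ) (a b : ℝ) (hab : a < b) (ha : p.eval a < 0)
    (hb : 0 < p.eval b) : ∃ c, a < c ∧ c < b ∧ p.eval c = 0 := by
  have hc : ContinuousOn (fun x => p.eval x) (Set.Icc a b) :=
    (Polynomial.continuous p).continuousOn
  have h0 : (0 : ℝ) ∈ Set.Ioo (p.eval a) (p.eval b) := ⟨ha, hb⟩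
  obtain ⟨c, hc1, hc2⟩ := intermediate_value_Ioo hab.le hc h0
  exact ⟨c, hc1.1, hc1.2, hc2⟩

lemma root_ivt' (p : Polynomial ℝ) (a b : ℝ) (hab : a < b) (ha : 0 < p.eval a)
    (hb : p.eval b < 0) : ∃ c, a < c ∧ c < b ∧ p.eval c = 0 := by
  obtain ⟨c, h1, h2, h3⟩ := root_ivt (-p) a b hab (by simp [ha]) (by simp [hb])
  refine ⟨c, h1, h2, ?_⟩
  simpa using h3

lemma card_filter_le_val (n k : ℕ) :
    ((Finset.univ : Finset (Fin n)).filter (fun i => k ≤ i.val)).card = n - k := by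
  have h : ((Finset.univ : Finset (Fin n)).filter (fun i => k ≤ i.val)).card
      = (Finset.Ico k n).card := by
    apply Finset.card_bij (fun (i : Fin n) _ => i.val)
    · intro a ha
      simp only [Finset.mem_filter, Finset.mem_univ, true_and] at ha
      simp only [Finset.mem_Ico]
      exact ⟨ha, a.isLt⟩
    · intro a _ b _ hab
      exact Fin.val_injective hab
    · intro b hb
      simp only [Finset.mem_Ico] at hb
      exact ⟨⟨b, hb.2⟩, by simp [hb.1], rfl⟩
  rw [h, Nat.card_Ico]

lemma interlace : ∀ n : ℕ, ∃ (r : Fin n → ℝ) (s : Fin (n + 1) → ℝ),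
    StrictMono s ∧ (∀ i, (P n).eval (r i) = 0) ∧ (∀ j, (P (n + 1)).eval (s j) = 0) ∧
    (∀ i : Fin n, s i.castSucc < r i ∧ r i < s i.succ) := by
  intro n
  induction n with
  | zero =>
    refine ⟨Fin.elim0, fun _ => 0, ?_, fun i => i.elim0, ?_, fun i => i.elim0⟩
    · intro a b hab
      rw [Fin.lt_def] at hab
      omega
    · intro j
      simp [P]
  | succ n ih =>
    obtain ⟨r, s, hsmono, hrroot, hsroot, hint⟩ := ih
    obtain ⟨hdn, hln⟩ := P_spec n
    obtain ⟨hdn2, hln2⟩ := P_spec (n + 2)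
    have hrmono : StrictMono r := by
      intro i i' hii
      have h1 : r i < s i.succ := (hint i).2
      have h2 : s i'.castSucc < r i' := (hint i').1
      have h3 : s i.succ ≤ s i'.castSucc := by
        apply hsmono.monotone
        rw [Fin.le_def]
        simp only [Fin.val_succ, Fin.coe_castSucc]
        exact hii
      linarith
    have hsign : ∀ j : Fin (n + 1), 0 < (-1 : ℝ) ^ (n - j.val) * (P n).eval (s j) := by
      intro j
      apply eval_sign (P n) n hdn hln r hrmono.injective hrroot (s j) (n - j.val) ?_ ?_
      · have hset : Finset.univ.filter (fun i : Fin n => s j < r i)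
            = Finset.univ.filter (fun i : Fin n => (j : ℕ) ≤ i.val) := by
          ext i
          simp only [Finset.mem_filter, Finset.mem_univ, true_and]
          constructor
          · intro hlt
            by_contra hc
            push_neg at hc
            have h1 : r i < s i.succ := (hint i).2
            have h2 : s i.succ ≤ s j := by
              apply hsmono.monotone
              rw [Fin.le_def]
              simp only [Fin.val_succ]
              omega
            linarith
          · intro hle
            have h1 : s j ≤ s i.castSucc := by
              apply hsmono.monotone
              rw [Fin.le_def]
              simp only [Fin.coe_castSucc]
              omega
            have h2 : s i.castSucc < r i := (hint i).1
            linarith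
        rw [hset]
        exact card_filter_le_val n j.val
      · intro i
        rcases lt_or_ge i.val j.val with h | h
        · have h1 : r i < s i.succ := (hint i).2
          have h2 : s i.succ ≤ s j := by
            apply hsmono.monotone
            rw [Fin.le_def]
            simp only [Fin.val_succ]
            omega
          exact ne_of_lt (by linarith)
        · have h1 : s j ≤ s i.castSucc := by
            apply hsmono.monotone
            rw [Fin.le_def]
            simp only [Fin.coe_castSucc]
            omega
          have h2 : s i.castSucc < r i := (hint i).1
          exact ne_of_gt (by linarith)
    have hsign2 : ∀ j : Fin (n + 1),
        0 < (-1 : ℝ) ^ (n + 1 - j.val) * (P (n + 2)).eval (s j) := by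
      intro j
      have hrec := P_eval_rec n (s j)
      rw [hsroot j] at hrec
      have hjn : j.val ≤ n := Nat.lt_succ_iff.mp j.isLt
      have hexp : n + 1 - j.val = (n - j.val) + 1 := by omega
      have hn2 : (0 : ℝ) < (n : ℝ) + 2 := by positivity
      have h0 := hsign j
      have h3 : 0 < ((n : ℝ) + 2)
          * ((-1 : ℝ) ^ (n + 1 - j.val) * (P (n + 2)).eval (s j)) := by
        have heq : ((n : ℝ) + 2) * ((-1 : ℝ) ^ (n + 1 - j.val) * (P (n + 2)).eval (s j))
            = (-1 : ℝ) ^ (n + 1 - j.val)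
              * (((n : ℝ) + 2) * (P (n + 2)).eval (s j)) := by ring
        rw [heq, hrec, hexp, pow_succ]
        have heq2 : (-1 : ℝ) ^ (n - j.val) * (-1)
              * (2 * s j * 0 - ((n : ℝ) + 1) * (P n).eval (s j))
            = ((n : ℝ) + 1) * ((-1 : ℝ) ^ (n - j.val) * (P n).eval (s j)) := by ring
        rw [heq2]
        exact mul_pos (by positivity) h0
      exact (mul_pos_iff_of_pos_left hn2).mp h3
    -- middle roots
    have hmid : ∀ k : Fin n, ∃ c, s k.castSucc < c ∧ c < s k.succ ∧ (P (n + 2)).eval c = 0 := by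
      intro k
      have h1 := hsign2 k.castSucc
      have h2 := hsign2 k.succ
      simp only [Fin.coe_castSucc] at h1
      simp only [Fin.val_succ] at h2
      have hkn : k.val < n := k.isLt
      have he1 : n + 1 - k.val = (n - k.val) + 1 := by omega
      have he2 : n + 1 - (k.val + 1) = n - k.val := by omega
      rw [he1, pow_succ] at h1
      rw [he2] at h2
      have hklt : s k.castSucc < s k.succ := hsmono (by rw [Fin.lt_def]; simp)
      rcases Nat.even_or_odd (n - k.val) with he | ho
      · rw [he.neg_one_pow] at h1 h2
        simp only [one_mul] at h2
        have h1' : (P (n + 2)).eval (s k.castSucc) < 0 := by nlinarith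
        exact root_ivt _ _ _ hklt h1' h2
      · rw [ho.neg_one_pow] at h1 h2
        have h1' : 0 < (P (n + 2)).eval (s k.castSucc) := by nlinarith
        have h2' : (P (n + 2)).eval (s k.succ) < 0 := by nlinarith
        exact root_ivt' _ _ _ hklt h1' h2'
    -- top root
    have htop : ∃ c, s (Fin.last n) < c ∧ (P (n + 2)).eval c = 0 := by
      have h1 := hsign2 (Fin.last n)
      simp only [Fin.val_last] at h1
      rw [(by omega : n + 1 - n = 1), pow_one] at h1
      have h1' : (P (n + 2)).eval (s (Fin.last n)) < 0 := by nlinarith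
      obtain ⟨b, hb1, hb2⟩ := exists_gt_pos (P (n + 2)) (by omega) hln2 (s (Fin.last n))
      obtain ⟨c, hc1, _, hc3⟩ := root_ivt _ _ _ hb1 h1' hb2
      exact ⟨c, hc1, hc3⟩
    -- bottom root
    have hbot : ∃ c, c < s 0 ∧ (P (n + 2)).eval c = 0 := by
      have h1 := hsign2 0
      simp only [Fin.val_zero, Nat.sub_zero] at h1
      obtain ⟨b, hb1, hb2⟩ := exists_lt_sign (P (n + 2)) (by omega) hln2 (s 0)
      rw [hdn2] at hb2
      rcases Nat.even_or_odd n with he | ho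
      · have hodd : Odd (n + 1) := Even.add_one he
        have heven : Even (n + 2) := by
          rcases he with ⟨m, hm⟩; exact ⟨m + 1, by omega⟩
        rw [hodd.neg_one_pow] at h1
        rw [heven.neg_one_pow, one_mul] at hb2
        have h1' : (P (n + 2)).eval (s 0) < 0 := by nlinarith
        obtain ⟨c, _, hc2, hc3⟩ := root_ivt' _ _ _ hb1 hb2 h1'
        exact ⟨c, hc2, hc3⟩
      · have heven : Even (n + 1) := Odd.add_one ho
        have hodd2 : Odd (n + 2) := by
          rcases ho with ⟨m, hm⟩; exact ⟨m + 1, by omega⟩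
        rw [heven.neg_one_pow, one_mul] at h1
        rw [hodd2.neg_one_pow] at hb2
        have hb2' : (P (n + 2)).eval b < 0 := by nlinarith
        obtain ⟨c, _, hc2, hc3⟩ := root_ivt _ _ _ hb1 hb2' h1
        exact ⟨c, hc2, hc3⟩
    choose cmid hc1 hc2 hc3 using hmid
    obtain ⟨cb, hcb1, hcb2⟩ := hbot
    obtain ⟨ct, hct1, hct2⟩ := htop
    set t : Fin (n + 2) → ℝ := fun j =>
      if h0 : j.val = 0 then cb
      else if h1 : j.val = n + 1 then ct
      else cmid ⟨j.val - 1, by omega⟩ with ht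
    have hint' : ∀ j : Fin (n + 1), t j.castSucc < s j ∧ s j < t j.succ := by
      intro j
      have hjn : j.val ≤ n := Nat.lt_succ_iff.mp j.isLt
      constructor
      · by_cases h0 : j.val = 0
        · have hj0 : j = 0 := Fin.ext h0
          have htv : t j.castSucc = cb := by
            rw [ht]
            simp only [Fin.coe_castSucc]
            rw [dif_pos h0]
          rw [htv, hj0]
          exact hcb1
        · have hlt : j.val - 1 < n := by omega
          have htv : t j.castSucc = cmid ⟨j.val - 1, hlt⟩ := by
            rw [ht]
            simp only [Fin.coe_castSucc]
            rw [dif_neg h0, dif_neg (by omega : ¬ j.val = n + 1)]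
          have hsucc : (⟨j.val - 1, hlt⟩ : Fin n).succ = j := by
            apply Fin.ext
            simp only [Fin.val_succ]
            omega
          have hx := hc2 ⟨j.val - 1, hlt⟩
          rw [hsucc] at hx
          rw [htv]
          exact hx
      · by_cases h0 : j.val = n
        · have htv : t j.succ = ct := by
            rw [ht]
            simp only [Fin.val_succ]
            rw [dif_neg (by omega : ¬ j.val + 1 = 0), dif_pos (by omega : j.val + 1 = n + 1)]
          have hjl : j = Fin.last n := Fin.ext (by simpa using h0)
          rw [htv, hjl]
          exact hct1
        · have hlt : j.val < n := by omega
          have htv : t j.succ = cmid ⟨j.val, hlt⟩ := by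
            rw [ht]
            simp only [Fin.val_succ]
            rw [dif_neg (by omega : ¬ j.val + 1 = 0), dif_neg (by omega : ¬ j.val + 1 = n + 1)]
            congr 1
          have hcast : (⟨j.val, hlt⟩ : Fin n).castSucc = j := by
            apply Fin.ext
            simp only [Fin.coe_castSucc]
          have hx := hc1 ⟨j.val, hlt⟩
          rw [hcast] at hx
          rw [htv]
          exact hx
    have htmono : StrictMono t := by
      rw [Fin.strictMono_iff_lt_succ]
      intro j
      exact lt_trans (hint' j).1 (hint' j).2
    have htroot : ∀ j, (P (n + 2)).eval (t j) = 0 := by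
      intro j
      simp only [ht]
      by_cases h0 : j.val = 0
      · rw [dif_pos h0]; exact hcb2
      · rw [dif_neg h0]
        by_cases h1 : j.val = n + 1
        · rw [dif_pos h1]; exact hct2
        · rw [dif_neg h1]; exact hc3 _
    exact ⟨s, t, htmono, hsroot, htroot, hint'⟩

/-- For all sufficiently large `d`, the degree-`d` polynomial `L_d` has `d` distinct
complex roots. -/
theorem ehrhart_roots_distinct :
    ∃ D : ℕ, ∀ d : ℕ, D ≤ d → {z : ℂ | Lpoly d z = 0}.ncard = d := by
  refine ⟨1, ?_⟩
  intro d hd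
  obtain ⟨n, rfl⟩ : ∃ n, d = n + 1 := ⟨d - 1, by omega⟩
  set Q : Polynomial ℂ := ∑ j ∈ Finset.range (n + 2),
    Polynomial.C ((Nat.choose (n + 1) j : ℂ) / (Nat.factorial (n + 1) : ℂ))
      * ∏ k ∈ Finset.range (n + 1),
          (Polynomial.X + Polynomial.C (((n + 1 : ℕ) : ℂ) - j - k)) with hQ
  have heval : ∀ z : ℂ, Q.eval z = Lpoly (n + 1) z := by
    intro z
    rw [hQ, Polynomial.eval_finset_sum, Lpoly]
    apply Finset.sum_congr rfl
    intro j _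
    rw [Polynomial.eval_mul, Polynomial.eval_C, Polynomial.eval_prod]
    simp only [Polynomial.eval_add, Polynomial.eval_X, Polynomial.eval_C]
    rw [cbinom]
    rw [Finset.prod_congr rfl (fun k (_ : k ∈ Finset.range (n+1)) =>
      (by push_cast; ring : z + ((((n + 1 : ℕ)) : ℂ) - j - k)
        = (((n + 1 : ℕ) : ℂ)) - (j : ℂ) + z - k))]
    ring
  have hQd : Q.natDegree ≤ n + 1 := by
    apply Polynomial.natDegree_sum_le_of_forall_le
    intro j _
    refine le_trans (Polynomial.natDegree_C_mul_le _ _) ?_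
    refine le_trans (Polynomial.natDegree_prod_le _ _) ?_
    have : ∀ k ∈ Finset.range (n + 1),
        (Polynomial.X + Polynomial.C (((n + 1 : ℕ) : ℂ) - j - k)).natDegree ≤ 1 := by
      intro k _
      rw [Polynomial.natDegree_X_add_C]
    refine le_trans (Finset.sum_le_sum this) ?_
    simp
  obtain ⟨r, s, hsmono, _, hsroot, _⟩ := interlace n
  set w : Fin (n + 1) → ℂ := fun i => -(1/2) + Complex.I * (s i) with hw
  have hwZ : ∀ i, Lpoly (n + 1) (w i) = 0 := by
    intro i
    simp only [hw]
    rw [Lpoly_line, hsroot i]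
    simp
  have hwinj : Function.Injective w := by
    intro a b hab
    simp only [hw] at hab
    have h1 : Complex.I * (s a : ℂ) = Complex.I * (s b : ℂ) := by
      have := add_left_cancel hab
      exact this
    have h2 : ((s a : ℝ) : ℂ) = ((s b : ℝ) : ℂ) := mul_left_cancel₀ Complex.I_ne_zero h1
    exact hsmono.injective (by exact_mod_cast h2)
  have hQne : Q ≠ 0 := by
    obtain ⟨hdeg, hlc⟩ := P_spec (n + 1)
    obtain ⟨b, _, hb⟩ := exists_gt_pos (P (n + 1)) (by omega) hlc 0
    intro h
    have h2 := heval (-(1/2) + Complex.I * b)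
    rw [h, Lpoly_line] at h2
    simp only [Polynomial.eval_zero] at h2
    have h3 : (((P (n + 1)).eval b : ℝ) : ℂ) = 0 := by
      have hI : (Complex.I : ℂ) ^ (n + 1) ≠ 0 := pow_ne_zero _ Complex.I_ne_zero
      field_simp at h2
      exact (mul_eq_zero.mp h2.symm).resolve_left hI
    rw [Complex.ofReal_eq_zero] at h3
    linarith
  have hset : {z : ℂ | Lpoly (n + 1) z = 0} = ↑Q.roots.toFinset := by
    ext z
    simp only [Set.mem_setOf_eq, Finset.coe_sort_coe, Finset.mem_coe, Multiset.mem_toFinset,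
      Polynomial.mem_roots hQne, Polynomial.IsRoot, heval z]
  rw [hset, Set.ncard_coe_finset]
  have hle : Q.roots.toFinset.card ≤ n + 1 :=
    le_trans (Multiset.toFinset_card_le _) (le_trans (Polynomial.card_roots' Q) hQd)
  have hge : n + 1 ≤ Q.roots.toFinset.card := by
    have hsub : Finset.image w Finset.univ ⊆ Q.roots.toFinset := by
      intro z hz
      simp only [Finset.mem_image, Finset.mem_univ, true_and] at hz
      obtain ⟨i, rfl⟩ := hz
      rw [Multiset.mem_toFinset, Polynomial.mem_roots hQne]
      show Q.IsRoot (w i)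
      rw [Polynomial.IsRoot, heval, hwZ i]
    calc n + 1 = (Finset.image w Finset.univ).card := by
          rw [Finset.card_image_of_injective _ hwinj, Finset.card_univ, Fintype.card_fin]
      _ ≤ _ := Finset.card_le_card hsub
  omega
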